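/- (Sundman–Weierstrass total collapse theorem) Consider a solution of the Newtonian N-body problem (N ≥ 2) on [t₀, t*) in the center-of-mass frame (Σ_j m_j r_j(t) = 0 for all t), with positions pairwise distinct at every time, and suppose total collapse occurs at time t*: all positions r_j(t) converge to a common point p ∈ ℝ³ as t → t*⁻. Then the (constant) total angular momentum vanishes: c = Σ_j m_j r_j(t) × v_j(t) = 0. -/

import Mathlib

/-- The cross product on `ℝ³`, viewed as `EuclideanSpace ℝ (Fin 3)`. -/
noncomputable def cross (u v : EuclideanSpace ℝ (Fin 3)) : EuclideanSpace ℝ (Fin 3) :=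
  (WithLp.equiv 2 (Fin 3 → ℝ)).symm
    (crossProduct ((WithLp.equiv 2 (Fin 3 → ℝ)) u) ((WithLp.equiv 2 (Fin 3 → ℝ)) v))

namespace SWaux

abbrev E3 := EuclideanSpace ℝ (Fin 3)

noncomputable def crossL : E3 →ₗ[ℝ] E3 →ₗ[ℝ] E3 :=
  LinearMap.mk₂ ℝ cross
    (fun u v w => by simp [cross, map_add, WithLp.ofLp_add, WithLp.toLp_add])
    (fun c u v => by simp [cross, map_smul, WithLp.ofLp_smul, WithLp.toLp_smul])
    (fun u v w => by simp [cross, map_add, WithLp.ofLp_add, WithLp.toLp_add])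
    (fun c u v => by simp [cross, map_smul, WithLp.ofLp_smul, WithLp.toLp_smul])

noncomputable def crossCLM : E3 →L[ℝ] E3 →L[ℝ] E3 :=
  LinearMap.toContinuousLinearMap
    ((LinearMap.toContinuousLinearMap.toLinearMap).comp crossL)

@[simp] lemma crossCLM_apply (u v : E3) : crossCLM u v = cross u v := rfl

lemma cross_self_zero (u : E3) : cross u u = 0 := by
  simp [cross, cross_self]

lemma cross_add_cross_swap (u v : E3) : cross u v + cross v u = 0 := by
  rw [cross, cross, WithLp.equiv_symm_apply, ← WithLp.toLp_add, cross_anticomm']; rfl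

end SWaux

namespace SWaux

lemma norm_sq_eq (x : E3) : ‖x‖^2 = x 0^2 + x 1^2 + x 2^2 := by
  rw [EuclideanSpace.norm_eq, Real.sq_sqrt (by positivity)]
  simp [Fin.sum_univ_three, sq_abs]

lemma norm_cross_le (u v : E3) : ‖cross u v‖ ≤ ‖u‖ * ‖v‖ := by
  have key : ‖cross u v‖^2 ≤ (‖u‖ * ‖v‖)^2 := by
    rw [mul_pow, norm_sq_eq, norm_sq_eq, norm_sq_eq]
    have h0 : (cross u v) 0 = u 1 * v 2 - u 2 * v 1 := rfl
    have h1 : (cross u v) 1 = u 2 * v 0 - u 0 * v 2 := rfl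
    have h2 : (cross u v) 2 = u 0 * v 1 - u 1 * v 0 := rfl
    rw [h0, h1, h2]
    nlinarith [sq_nonneg (u 0 * v 0 + u 1 * v 1 + u 2 * v 2)]
  calc ‖cross u v‖ = Real.sqrt (‖cross u v‖^2) := (Real.sqrt_sq (norm_nonneg _)).symm
    _ ≤ Real.sqrt ((‖u‖ * ‖v‖)^2) := Real.sqrt_le_sqrt key
    _ = ‖u‖ * ‖v‖ := Real.sqrt_sq (by positivity)

end SWaux

namespace SWaux
lemma sum_erase_swap {M : Type*} [AddCommMonoid M] {N : ℕ} (F : Fin N → Fin N → M) :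
    ∑ j, ∑ k ∈ Finset.univ.erase j, F j k = ∑ j, ∑ k ∈ Finset.univ.erase j, F k j :=
  Finset.sum_comm' (by intro x y; simp [ne_comm])
end SWaux

namespace SWaux

lemma hasDerivAt_inv_norm {w : ℝ → E3} {w' : E3} {x : ℝ}
    (hw : HasDerivAt w w' x) (h0 : w x ≠ 0) :
    HasDerivAt (fun t => ‖w t‖⁻¹) (-(inner ℝ w' (w x) : ℝ) / ‖w x‖ ^ 3) x := by
  have hφ : HasDerivAt (fun t => (inner ℝ (w t) (w t) : ℝ)) (2 * (inner ℝ w' (w x) : ℝ)) x := by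
    have := hw.inner ℝ hw
    convert this using 1
    · rfl
    · rfl
    rw [real_inner_comm (w x) w']
    ring
  have hx0 : (inner ℝ (w x) (w x) : ℝ) ≠ 0 := by
    rw [real_inner_self_eq_norm_sq]
    exact pow_ne_zero _ (norm_ne_zero_iff.mpr h0)
  have hn0 : ‖w x‖ ≠ 0 := norm_ne_zero_iff.mpr h0
  have hnorm : HasDerivAt (fun t => ‖w t‖) ((inner ℝ w' (w x) : ℝ) / ‖w x‖) x := by
    have h1 : (fun t => ‖w t‖) = fun t => Real.sqrt (inner ℝ (w t) (w t) : ℝ) :=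
      funext fun t => by rw [real_inner_self_eq_norm_sq, Real.sqrt_sq (norm_nonneg _)]
    have h2 := (Real.hasDerivAt_sqrt hx0).comp x hφ
    rw [h1]
    convert h2 using 1
    · rfl
    · rfl
    · rfl
    rw [real_inner_self_eq_norm_sq, Real.sqrt_sq (norm_nonneg _)]
    field_simp
  have h3 := hnorm.inv hn0
  convert h3 using 1
  · rfl
  · rfl
  · rfl
  rw [show ‖w x‖ ^ 3 = ‖w x‖ * ‖w x‖ ^ 2 by ring, ← div_div, neg_div]

end SWaux

namespace SWaux
lemma sym_pair_smul {M : Type*} [AddCommGroup M] [Module ℝ M] {N : ℕ}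
    (c : Fin N → Fin N → ℝ) (hc : ∀ j k, c j k = c k j) (f : Fin N → Fin N → M) :
    ∑ j, ∑ k ∈ Finset.univ.erase j, c j k • f j k
      = (2:ℝ)⁻¹ • ∑ j, ∑ k ∈ Finset.univ.erase j, c j k • (f j k + f k j) := by
  have h1 : ∑ j, ∑ k ∈ Finset.univ.erase j, c j k • f k j
      = ∑ j, ∑ k ∈ Finset.univ.erase j, c j k • f j k := by
    rw [sum_erase_swap (fun j k => c j k • f k j)]
    exact Finset.sum_congr rfl fun j _ => Finset.sum_congr rfl fun k _ => by rw [hc]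
  simp_rw [smul_add, Finset.sum_add_distrib, h1, ← two_smul ℝ, smul_smul]
  norm_num
end SWaux

namespace SWaux

lemma hasDerivWithinAt_inv_norm {w : ℝ → E3} {w' : E3} {s : Set ℝ} {x : ℝ}
    (hw : HasDerivWithinAt w w' s x) (h0 : w x ≠ 0) :
    HasDerivWithinAt (fun t => ‖w t‖⁻¹) (-(inner ℝ w' (w x) : ℝ) / ‖w x‖ ^ 3) s x := by
  have hφ : HasDerivWithinAt (fun t => (inner ℝ (w t) (w t) : ℝ)) (2 * (inner ℝ w' (w x) : ℝ)) s x := by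
    have := hw.inner ℝ hw
    convert this using 1
    · rfl
    · rfl
    rw [real_inner_comm (w x) w']
    ring
  have hx0 : (inner ℝ (w x) (w x) : ℝ) ≠ 0 := by
    rw [real_inner_self_eq_norm_sq]
    exact pow_ne_zero _ (norm_ne_zero_iff.mpr h0)
  have hn0 : ‖w x‖ ≠ 0 := norm_ne_zero_iff.mpr h0
  have hnorm : HasDerivWithinAt (fun t => ‖w t‖) ((inner ℝ w' (w x) : ℝ) / ‖w x‖) s x := by
    have h1 : (fun t => ‖w t‖) = fun t => Real.sqrt (inner ℝ (w t) (w t) : ℝ) :=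
      funext fun t => by rw [real_inner_self_eq_norm_sq, Real.sqrt_sq (norm_nonneg _)]
    have h2 := (Real.hasDerivAt_sqrt hx0).comp_hasDerivWithinAt x hφ
    rw [h1]
    convert h2 using 1
    · rfl
    · rfl
    · rfl
    rw [real_inner_self_eq_norm_sq, Real.sqrt_sq (norm_nonneg _)]
    field_simp
  have h3 := hnorm.inv hn0
  convert h3 using 1
  · rfl
  · rfl
  · rfl
  rw [show ‖w x‖ ^ 3 = ‖w x‖ * ‖w x‖ ^ 2 by ring, ← div_div, neg_div]

lemma HasDerivWithinAt.crossd {r v : ℝ → E3} {r' v' : E3} {s : Set ℝ} {x : ℝ}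
    (hr : HasDerivWithinAt r r' s x) (hv : HasDerivWithinAt v v' s x) :
    HasDerivWithinAt (fun t => cross (r t) (v t))
      (cross r' (v x) + cross (r x) v') s x := by
  have hc : HasDerivWithinAt (fun t => crossCLM (r t)) (crossCLM r') s x :=
    (crossCLM.hasFDerivAt).comp_hasDerivWithinAt x hr
  exact hc.clm_apply hv

end SWaux

namespace SWaux
lemma const_on_Ico {X : Type*} [NormedAddCommGroup X] [NormedSpace ℝ X]
    {f : ℝ → X} {t₀ tstar : ℝ}
    (hf : ∀ t ∈ Set.Ico t₀ tstar, HasDerivWithinAt f 0 (Set.Ico t₀ tstar) t) :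
    ∀ t ∈ Set.Ico t₀ tstar, f t = f t₀ := by
  rintro t ⟨h1, h2⟩
  have hsub : Set.Icc t₀ t ⊆ Set.Ico t₀ tstar := fun x hx => ⟨hx.1, lt_of_le_of_lt hx.2 h2⟩
  refine constant_of_has_deriv_right_zero
    (fun x hx => ((hf x (hsub hx)).continuousWithinAt).mono hsub) (fun x hx => ?_) t ⟨h1, le_rfl⟩
  exact (hf x ⟨hx.1, lt_of_lt_of_le hx.2 (le_of_lt h2)⟩).mono_of_mem_nhdsWithin
    (Ico_mem_nhdsGE_of_mem ⟨hx.1, lt_of_lt_of_le hx.2 (le_of_lt h2)⟩)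
end SWaux

set_option maxHeartbeats 2000000 in
open SWaux Filter Set in
/-- **Sundman–Weierstrass total collapse theorem.** If a solution of the
Newtonian N-body problem (`N ≥ 2`) in the center-of-mass frame undergoes total
collapse at time `t*`, then its total angular momentum vanishes. -/
theorem sundman_weierstrass_total_collapse (N : ℕ) (hN : 2 ≤ N)
    (m : Fin N → ℝ) (hm : ∀ j, 0 < m j) (G : ℝ) (hG : 0 < G)
    (t₀ tstar : ℝ) (ht : t₀ < tstar)
    (r v a : Fin N → ℝ → EuclideanSpace ℝ (Fin 3))
    (hrv : ∀ j, ∀ t ∈ Set.Ico t₀ tstar,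
      HasDerivWithinAt (r j) (v j t) (Set.Ico t₀ tstar) t)
    (hva : ∀ j, ∀ t ∈ Set.Ico t₀ tstar,
      HasDerivWithinAt (v j) (a j t) (Set.Ico t₀ tstar) t)
    (hacont : ∀ j, ContinuousOn (a j) (Set.Ico t₀ tstar))
    (hsep : ∀ t ∈ Set.Ico t₀ tstar, ∀ j k, j ≠ k → r j t ≠ r k t)
    (hNewton : ∀ j, ∀ t ∈ Set.Ico t₀ tstar,
      m j • a j t = ∑ k ∈ Finset.univ.erase j,
        (G * m j * m k / ‖r k t - r j t‖ ^ 3) • (r k t - r j t))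
    (hcm : ∀ t ∈ Set.Ico t₀ tstar, ∑ j, m j • r j t = 0)
    (p : EuclideanSpace ℝ (Fin 3))
    (hcollapse : ∀ j, Filter.Tendsto (r j) (nhdsWithin tstar (Set.Iio tstar)) (nhds p)) :
    ∀ t ∈ Set.Ico t₀ tstar, ∑ j, m j • cross (r j t) (v j t) = 0 := by
  set S : Set ℝ := Set.Ico t₀ tstar with hSdef
  set L : Filter ℝ := nhdsWithin tstar (Set.Iio tstar) with hLdef
  -- local functions
  set I : ℝ → ℝ := fun t => ∑ j, m j * ‖r j t‖ ^ 2 with hIdef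
  set J : ℝ → ℝ := fun t => ∑ j, 2 * m j * (inner ℝ (r j t) (v j t) : ℝ) with hJdef
  set W : ℝ → ℝ := fun t => ∑ j, m j * ‖v j t‖ ^ 2 with hWdef
  set U : ℝ → ℝ := fun t => (2:ℝ)⁻¹ * ∑ j, ∑ k ∈ Finset.univ.erase j,
      G * m j * m k * ‖r k t - r j t‖⁻¹ with hUdef
  set F : ℝ → ℝ := fun t => ∑ j, ∑ k ∈ Finset.univ.erase j,
      (G * m j * m k / ‖r k t - r j t‖ ^ 3) * (inner ℝ (v j t) (r k t - r j t) : ℝ) with hFdef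
  set C : ℝ → E3 := fun t => ∑ j, m j • cross (r j t) (v j t) with hCdef
  have hLne : L.NeBot := nhdsLT_neBot tstar
  -- two distinct indices
  have h2 : (1 : ℕ) < N := hN
  set j0 : Fin N := ⟨0, by omega⟩ with hj0
  set j1 : Fin N := ⟨1, by omega⟩ with hj1
  have hj01 : j0 ≠ j1 := by simp [hj0, hj1, Fin.ext_iff]
  have hne : ∀ t ∈ S, ∀ j k, j ≠ k → r k t - r j t ≠ 0 := fun t htS j k hjk =>
    sub_ne_zero.mpr (hsep t htS k j (Ne.symm hjk))
  have hIpos : ∀ t ∈ S, 0 < I t := by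
    intro t htS
    have hsep' := hsep t htS j0 j1 hj01
    have hA : ∃ j, r j t ≠ 0 := by
      by_contra h
      push_neg at h
      exact hsep' (by rw [h j0, h j1])
    obtain ⟨j, hj⟩ := hA
    have h1 : 0 < m j * ‖r j t‖ ^ 2 :=
      mul_pos (hm j) (pow_pos (norm_pos_iff.mpr hj) 2)
    have h2 : m j * ‖r j t‖ ^ 2 ≤ ∑ i, m i * ‖r i t‖ ^ 2 :=
      Finset.single_le_sum (f := fun i => m i * ‖r i t‖ ^ 2)
        (fun i _ => mul_nonneg (hm i).le (sq_nonneg _)) (Finset.mem_univ j)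
    exact lt_of_lt_of_le h1 h2
  have hId : ∀ t ∈ S, HasDerivWithinAt I (J t) S t := by
    intro t htS
    have H : ∀ j : Fin N, HasDerivWithinAt (fun s => m j * ‖r j s‖ ^ 2)
        (2 * m j * (inner ℝ (r j t) (v j t) : ℝ)) S t := by
      intro j
      have h1 := ((hrv j t htS).inner ℝ (hrv j t htS)).const_mul (m j)
      have h2 : (fun s => m j * ‖r j s‖ ^ 2)
          = fun s => m j * (inner ℝ (r j s) (r j s) : ℝ) :=
        funext fun s => by rw [real_inner_self_eq_norm_sq]
      rw [h2]
      convert h1 using 1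
      · rfl
      · rfl
      rw [real_inner_comm (v j t) (r j t)]
      ring
    exact HasDerivWithinAt.fun_sum fun j _ => H j
  have hcsym : ∀ t ∈ S, ∀ j k : Fin N, G * m j * m k / ‖r k t - r j t‖ ^ 3
      = G * m k * m j / ‖r j t - r k t‖ ^ 3 := by
    intro t htS j k
    rw [norm_sub_rev (r j t) (r k t)]
    ring
  have hWd : ∀ t ∈ S, HasDerivWithinAt W (2 * F t) S t := by
    intro t htS
    have H : ∀ j : Fin N, HasDerivWithinAt (fun s => m j * ‖v j s‖ ^ 2)
        (2 * ∑ k ∈ Finset.univ.erase j,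
          (G * m j * m k / ‖r k t - r j t‖ ^ 3) * (inner ℝ (v j t) (r k t - r j t) : ℝ)) S t := by
      intro j
      have h1 := ((hva j t htS).inner ℝ (hva j t htS)).const_mul (m j)
      have h2 : (fun s => m j * ‖v j s‖ ^ 2) = fun s => m j * (inner ℝ (v j s) (v j s) : ℝ) :=
        funext fun s => by rw [real_inner_self_eq_norm_sq]
      rw [h2]
      convert h1 using 1
      · rfl
      · rfl
      have hx : (inner ℝ (v j t) ((m j) • a j t) : ℝ) = ∑ k ∈ Finset.univ.erase j,
          (G * m j * m k / ‖r k t - r j t‖ ^ 3) * (inner ℝ (v j t) (r k t - r j t) : ℝ) := by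
        rw [hNewton j t htS, inner_sum]
        exact Finset.sum_congr rfl fun k _ => real_inner_smul_right _ _ _
      rw [real_inner_smul_right] at hx
      rw [← hx, real_inner_comm (a j t) (v j t)]
      ring
    have hsum := HasDerivWithinAt.fun_sum fun j (_ : j ∈ Finset.univ) => H j
    convert hsum using 1
    · rfl
    · rfl
    rw [hFdef, Finset.mul_sum]
  have hUd : ∀ t ∈ S, HasDerivWithinAt U (F t) S t := by
    intro t htS
    have hterm : ∀ j : Fin N, ∀ k ∈ Finset.univ.erase j, HasDerivWithinAt
        (fun s => G * m j * m k * ‖r k s - r j s‖⁻¹)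
        (G * m j * m k * (-(inner ℝ (v k t - v j t) (r k t - r j t) : ℝ)
          / ‖r k t - r j t‖ ^ 3)) S t := by
      intro j k hk
      have hk' : k ≠ j := (Finset.mem_erase.mp hk).1
      have hw : HasDerivWithinAt (fun s => r k s - r j s) (v k t - v j t) S t :=
        (hrv k t htS).sub (hrv j t htS)
      exact (hasDerivWithinAt_inv_norm hw (hne t htS j k (Ne.symm hk'))).const_mul _
    have hsum := (HasDerivWithinAt.fun_sum fun j (_ : j ∈ Finset.univ) =>
        HasDerivWithinAt.fun_sum fun k hk => hterm j k hk).const_mul (2:ℝ)⁻¹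
    convert hsum using 1
    · rfl
    · rfl
    have hsym := sym_pair_smul (fun j k => G * m j * m k / ‖r k t - r j t‖ ^ 3)
      (hcsym t htS) (fun j k => (inner ℝ (v j t) (r k t - r j t) : ℝ))
    simp only [smul_eq_mul] at hsym
    rw [hFdef]
    calc (∑ j, ∑ k ∈ Finset.univ.erase j, (G * m j * m k / ‖r k t - r j t‖ ^ 3)
          * (inner ℝ (v j t) (r k t - r j t) : ℝ))
        = (2:ℝ)⁻¹ * ∑ j, ∑ k ∈ Finset.univ.erase j, (G * m j * m k / ‖r k t - r j t‖ ^ 3)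
            * ((inner ℝ (v j t) (r k t - r j t) : ℝ) + (inner ℝ (v k t) (r j t - r k t) : ℝ)) :=
          hsym
      _ = (2:ℝ)⁻¹ * ∑ j, ∑ k ∈ Finset.univ.erase j, G * m j * m k
            * (-(inner ℝ (v k t - v j t) (r k t - r j t) : ℝ) / ‖r k t - r j t‖ ^ 3) := by
          congr 1
          refine Finset.sum_congr rfl fun j _ => Finset.sum_congr rfl fun k _ => ?_
          simp only [inner_sub_left, inner_sub_right]
          ring
  have hinnkey : ∀ x y : E3, (inner ℝ x (y - x) : ℝ) + (inner ℝ y (x - y) : ℝ) = -‖y - x‖ ^ 2 := by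
    intro x y
    have h := real_inner_self_eq_norm_sq (y - x)
    simp only [inner_sub_right, inner_sub_left] at h ⊢
    have hc := real_inner_comm x y
    linarith
  have hA : ∀ t ∈ S, ∑ j, m j * (inner ℝ (r j t) (a j t) : ℝ) = - U t := by
    intro t htS
    have h1 : ∀ j : Fin N, m j * (inner ℝ (r j t) (a j t) : ℝ)
        = ∑ k ∈ Finset.univ.erase j, (G * m j * m k / ‖r k t - r j t‖ ^ 3)
          • (inner ℝ (r j t) (r k t - r j t) : ℝ) := by
      intro j
      rw [← real_inner_smul_right, hNewton j t htS, inner_sum]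
      exact Finset.sum_congr rfl fun k _ => by
        rw [real_inner_smul_right, smul_eq_mul]
    calc ∑ j, m j * (inner ℝ (r j t) (a j t) : ℝ)
        = ∑ j, ∑ k ∈ Finset.univ.erase j, (G * m j * m k / ‖r k t - r j t‖ ^ 3)
            • (inner ℝ (r j t) (r k t - r j t) : ℝ) := Finset.sum_congr rfl fun j _ => h1 j
      _ = (2:ℝ)⁻¹ • ∑ j, ∑ k ∈ Finset.univ.erase j, (G * m j * m k / ‖r k t - r j t‖ ^ 3)
            • ((inner ℝ (r j t) (r k t - r j t) : ℝ) + (inner ℝ (r k t) (r j t - r k t) : ℝ)) :=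
          sym_pair_smul _ (hcsym t htS) _
      _ = (2:ℝ)⁻¹ • ∑ j, ∑ k ∈ Finset.univ.erase j,
            -(G * m j * m k * ‖r k t - r j t‖⁻¹) := by
          congr 1
          refine Finset.sum_congr rfl fun j _ => Finset.sum_congr rfl fun k hk => ?_
          have hk' : k ≠ j := (Finset.mem_erase.mp hk).1
          have hd : ‖r k t - r j t‖ ≠ 0 :=
            norm_ne_zero_iff.mpr (hne t htS j k (Ne.symm hk'))
          rw [hinnkey (r j t) (r k t), smul_eq_mul]
          field_simp
      _ = - U t := by
          rw [hUdef]
          simp only [Finset.sum_neg_distrib, smul_eq_mul]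
          ring
  have hJd : ∀ t ∈ S, HasDerivWithinAt J (2 * W t - 2 * U t) S t := by
    intro t htS
    have H : ∀ j : Fin N, HasDerivWithinAt (fun s => 2 * m j * (inner ℝ (r j s) (v j s) : ℝ))
        (2 * m j * ((inner ℝ (r j t) (a j t) : ℝ) + (inner ℝ (v j t) (v j t) : ℝ))) S t := by
      intro j
      have h1 := ((hrv j t htS).inner ℝ (hva j t htS)).const_mul (2 * m j)
      convert h1 using 1
    have hsum := HasDerivWithinAt.fun_sum fun j (_ : j ∈ Finset.univ) => H j
    convert hsum using 1
    · rfl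
    · rfl
    have hW' : ∑ j, 2 * m j * (inner ℝ (v j t) (v j t) : ℝ) = 2 * W t := by
      rw [hWdef, Finset.mul_sum]
      exact Finset.sum_congr rfl fun j _ => by
        rw [real_inner_self_eq_norm_sq]; ring
    have hA' := hA t htS
    calc 2 * W t - 2 * U t
        = 2 * (∑ j, m j * (inner ℝ (r j t) (a j t) : ℝ))
          + ∑ j, 2 * m j * (inner ℝ (v j t) (v j t) : ℝ) := by
          rw [hA', hW']; ring
      _ = ∑ j, 2 * m j * ((inner ℝ (r j t) (a j t) : ℝ) + (inner ℝ (v j t) (v j t) : ℝ)) := by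
          rw [Finset.mul_sum, ← Finset.sum_add_distrib]
          exact Finset.sum_congr rfl fun j _ => by ring
  have hCd : ∀ t ∈ S, HasDerivWithinAt C 0 S t := by
    intro t htS
    have H : ∀ j : Fin N, HasDerivWithinAt (fun s => m j • cross (r j s) (v j s))
        (m j • (cross (v j t) (v j t) + cross (r j t) (a j t))) S t :=
      fun j => (HasDerivWithinAt.crossd (hrv j t htS) (hva j t htS)).const_smul (m j)
    have hsum := HasDerivWithinAt.fun_sum fun j (_ : j ∈ Finset.univ) => H j
    refine hsum.congr_deriv ?_
    calc ∑ j, m j • (cross (v j t) (v j t) + cross (r j t) (a j t))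
        = ∑ j, cross (r j t) (m j • a j t) := Finset.sum_congr rfl fun j _ => by
          rw [cross_self_zero, zero_add]
          exact ((crossL (r j t)).map_smul (m j) (a j t)).symm
      _ = ∑ j, ∑ k ∈ Finset.univ.erase j,
            (G * m j * m k / ‖r k t - r j t‖ ^ 3) • cross (r j t) (r k t - r j t) :=
          Finset.sum_congr rfl fun j _ => by
            rw [hNewton j t htS]
            show (crossL (r j t)) _ = _
            rw [map_sum]
            exact Finset.sum_congr rfl fun k _ => (crossL (r j t)).map_smul _ _
      _ = (2:ℝ)⁻¹ • ∑ j, ∑ k ∈ Finset.univ.erase j,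
            (G * m j * m k / ‖r k t - r j t‖ ^ 3)
              • (cross (r j t) (r k t - r j t) + cross (r k t) (r j t - r k t)) :=
          sym_pair_smul _ (hcsym t htS) _
      _ = 0 := by
          have hz : ∀ j k : Fin N,
              cross (r j t) (r k t - r j t) + cross (r k t) (r j t - r k t) = 0 := by
            intro j k
            have e1 : cross (r j t) (r k t - r j t)
                = cross (r j t) (r k t) - cross (r j t) (r j t) :=
              (crossL (r j t)).map_sub _ _
            have e2 : cross (r k t) (r j t - r k t)
                = cross (r k t) (r j t) - cross (r k t) (r k t) :=
              (crossL (r k t)).map_sub _ _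
            rw [e1, e2, cross_self_zero, cross_self_zero, sub_zero, sub_zero]
            exact cross_add_cross_swap _ _
          simp [hz]
  -- conserved quantities
  have hCconst : ∀ t ∈ S, C t = C t₀ := const_on_Ico hCd
  have hEconst : ∀ t ∈ S, (2:ℝ)⁻¹ * W t - U t = (2:ℝ)⁻¹ * W t₀ - U t₀ := by
    have := const_on_Ico (f := fun t => (2:ℝ)⁻¹ * W t - U t) (t₀ := t₀) (tstar := tstar) ?_
    · exact fun t htS => this t htS
    · intro t htS
      have h := ((hWd t htS).const_mul ((2:ℝ)⁻¹)).sub (hUd t htS)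
      convert h using 1
      · rfl
      ring
  set E0 : ℝ := (2:ℝ)⁻¹ * W t₀ - U t₀ with hE0def
  clear_value E0
  -- collapse point is the origin
  have hIoo_mem : Set.Ioo t₀ tstar ∈ L := Ioo_mem_nhdsLT_of_mem ⟨ht, le_rfl⟩
  have hIooS : Set.Ioo t₀ tstar ⊆ S := Set.Ioo_subset_Ico_self
  have hp0 : p = 0 := by
    have h1 : Filter.Tendsto (fun t => ∑ j, m j • r j t) L (nhds (∑ j, m j • p)) :=
      tendsto_finset_sum _ fun j _ => (hcollapse j).const_smul (m j)
    have h2 : Filter.Tendsto (fun t => ∑ j, m j • r j t) L (nhds 0) := by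
      apply Filter.Tendsto.congr' _ tendsto_const_nhds
      filter_upwards [hIoo_mem] with t htI
      exact (hcm t (hIooS htI)).symm
    have h3 : ∑ j, m j • p = 0 := tendsto_nhds_unique h1 h2
    have h4 : (∑ j, m j) • p = 0 := by rwa [← Finset.sum_smul] at h3
    have h5 : 0 < ∑ j, m j :=
      Finset.sum_pos (fun j _ => hm j) ⟨j0, Finset.mem_univ j0⟩
    rcases smul_eq_zero.mp h4 with h | h
    · exact absurd h (ne_of_gt h5)
    · exact h
  have hIlim : Filter.Tendsto I L (nhds 0) := by
    have h1 : Filter.Tendsto I L (nhds (∑ j, m j * ‖p‖ ^ 2)) :=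
      tendsto_finset_sum _ fun j _ => (((hcollapse j).norm).pow 2).const_mul (m j)
    simpa [hp0] using h1
  have hUlim : Filter.Tendsto U L Filter.atTop := by
    have hd0 : Filter.Tendsto (fun t => ‖r j1 t - r j0 t‖) L (nhds 0) := by
      have := ((hcollapse j1).sub (hcollapse j0)).norm
      simpa using this
    have hdpos : ∀ᶠ t in L, 0 < ‖r j1 t - r j0 t‖ := by
      filter_upwards [hIoo_mem] with t htI
      exact norm_pos_iff.mpr (hne t (hIooS htI) j0 j1 hj01)
    have h2 : Filter.Tendsto (fun t => ‖r j1 t - r j0 t‖) L (nhdsWithin 0 (Set.Ioi 0)) :=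
      tendsto_nhdsWithin_iff.mpr ⟨hd0, hdpos⟩
    have h3 : Filter.Tendsto (fun t => ‖r j1 t - r j0 t‖⁻¹) L Filter.atTop :=
      tendsto_inv_nhdsGT_zero.comp h2
    have h4 : Filter.Tendsto
        (fun t => (2:ℝ)⁻¹ * (G * m j0 * m j1 * ‖r j1 t - r j0 t‖⁻¹)) L Filter.atTop := by
      apply Filter.Tendsto.const_mul_atTop (by norm_num : (0:ℝ) < 2⁻¹)
      exact Filter.Tendsto.const_mul_atTop (mul_pos (mul_pos hG (hm j0)) (hm j1)) h3
    apply Filter.tendsto_atTop_mono' L _ h4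
    filter_upwards [hIoo_mem] with t htI
    have htS := hIooS htI
    have hnn : ∀ j : Fin N, ∀ k ∈ Finset.univ.erase j,
        (0:ℝ) ≤ G * m j * m k * ‖r k t - r j t‖⁻¹ := fun j k _ =>
      mul_nonneg (mul_nonneg (mul_nonneg hG.le (hm j).le) (hm k).le)
        (inv_nonneg.mpr (norm_nonneg _))
    have hstep1 : G * m j0 * m j1 * ‖r j1 t - r j0 t‖⁻¹
        ≤ ∑ k ∈ Finset.univ.erase j0, G * m j0 * m k * ‖r k t - r j0 t‖⁻¹ :=
      Finset.single_le_sum (hnn j0) (Finset.mem_erase.mpr ⟨Ne.symm hj01, Finset.mem_univ j1⟩)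
    have hstep2 : ∑ k ∈ Finset.univ.erase j0, G * m j0 * m k * ‖r k t - r j0 t‖⁻¹
        ≤ ∑ j, ∑ k ∈ Finset.univ.erase j, G * m j * m k * ‖r k t - r j t‖⁻¹ :=
      Finset.single_le_sum (f := fun j => ∑ k ∈ Finset.univ.erase j,
        G * m j * m k * ‖r k t - r j t‖⁻¹)
        (fun j _ => Finset.sum_nonneg (hnn j)) (Finset.mem_univ j0)
    have : G * m j0 * m j1 * ‖r j1 t - r j0 t‖⁻¹
        ≤ ∑ j, ∑ k ∈ Finset.univ.erase j, G * m j * m k * ‖r k t - r j t‖⁻¹ :=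
      le_trans hstep1 hstep2
    rw [hUdef]
    calc (2:ℝ)⁻¹ * (G * m j0 * m j1 * ‖r j1 t - r j0 t‖⁻¹)
        ≤ (2:ℝ)⁻¹ * ∑ j, ∑ k ∈ Finset.univ.erase j, G * m j * m k * ‖r k t - r j t‖⁻¹ := by
          apply mul_le_mul_of_nonneg_left this (by norm_num)
      _ = _ := rfl
  -- continuity facts
  have hrc : ∀ j, ContinuousOn (r j) S := fun j => fun t htS => (hrv j t htS).continuousWithinAt
  have hvc : ∀ j, ContinuousOn (v j) S := fun j => fun t htS => (hva j t htS).continuousWithinAt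
  have hIc : ContinuousOn I S := fun t htS => (hId t htS).continuousWithinAt
  have hJc : ContinuousOn J S := fun t htS => (hJd t htS).continuousWithinAt
  have hWc : ContinuousOn W S := fun t htS => (hWd t htS).continuousWithinAt
  have hUc : ContinuousOn U S := fun t htS => (hUd t htS).continuousWithinAt
  -- choose t₁ with 2U + 4E0 ≥ 1 on [t₁, t*)
  obtain ⟨t₁, ht₁S, hK1⟩ : ∃ t₁, t₁ ∈ Set.Ioo t₀ tstar ∧
      ∀ s ∈ Set.Ico t₁ tstar, 1 ≤ 2 * U s + 4 * E0 := by
    have hev : {s | (1 - 4 * E0) / 2 ≤ U s} ∈ L := hUlim.eventually_ge_atTop _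
    rw [hLdef] at hev
    obtain ⟨l, hl, hsub⟩ := (mem_nhdsLT_iff_exists_Ioo_subset' ht).mp hev
    have hl' : max l t₀ < tstar := max_lt hl ht
    refine ⟨(max l t₀ + tstar) / 2,
      ⟨by linarith [le_max_right l t₀], by linarith⟩, ?_⟩
    intro s hs
    have hsl : l < s := lt_of_lt_of_le (by linarith [le_max_left l t₀]) hs.1
    have hU : (1 - 4 * E0) / 2 ≤ U s := hsub ⟨hsl, hs.2⟩
    linarith
  have hKeq : ∀ s ∈ S, 2 * W s - 2 * U s = 2 * U s + 4 * E0 := by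
    intro s hsS
    have h := hEconst s hsS
    linear_combination 4 * h
  -- J < 0 on [t₁, t*)
  have hJneg : ∀ s ∈ Set.Ico t₁ tstar, J s < 0 := by
    intro s hs
    have hsS : s ∈ S := ⟨le_trans ht₁S.1.le hs.1, hs.2⟩
    by_contra hcon
    push_neg at hcon
    have hmono : ∀ b ∈ Set.Ico s tstar, I s ≤ I b := by
      intro b hb
      rcases eq_or_lt_of_le hb.1 with heq | hsb
      · rw [← heq]
      have hIccS : Set.Icc s b ⊆ S := fun x hx =>
        ⟨le_trans hsS.1 hx.1, lt_of_le_of_lt hx.2 hb.2⟩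
      have hIoomem : ∀ x ∈ Set.Ioo s b, x ∈ S := fun x hx => hIccS ⟨hx.1.le, hx.2.le⟩
      have hIoo1 : ∀ x ∈ Set.Ioo s b, x ∈ Set.Ico t₁ tstar := fun x hx =>
        ⟨le_trans hs.1 hx.1.le, lt_trans hx.2 hb.2⟩
      have hnhds : ∀ x ∈ Set.Ioo s b, S ∈ nhds x := fun x hx => by
        rw [hSdef]
        exact Ico_mem_nhds (lt_of_lt_of_le (lt_of_lt_of_le ht₁S.1 hs.1) hx.1.le)
          (lt_trans hx.2 hb.2)
      have hDJ : ∀ x ∈ Set.Ioo s b, HasDerivAt J (2 * W x - 2 * U x) x := fun x hx =>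
        (hJd x (hIoomem x hx)).hasDerivAt (hnhds x hx)
      have hDI : ∀ x ∈ Set.Ioo s b, HasDerivAt I (J x) x := fun x hx =>
        (hId x (hIoomem x hx)).hasDerivAt (hnhds x hx)
      have hJmono : MonotoneOn J (Set.Icc s b) := by
        apply monotoneOn_of_deriv_nonneg (convex_Icc s b) (hJc.mono hIccS)
        · intro x hx
          rw [interior_Icc] at hx
          exact (hDJ x hx).differentiableAt.differentiableWithinAt
        · intro x hx
          rw [interior_Icc] at hx
          rw [(hDJ x hx).deriv, hKeq x (hIoomem x hx)]
          linarith [hK1 x (hIoo1 x hx)]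
      have hJnn : ∀ x ∈ Set.Icc s b, 0 ≤ J x := fun x hx =>
        le_trans hcon (hJmono (Set.left_mem_Icc.mpr hb.1) hx hx.1)
      have hImono : MonotoneOn I (Set.Icc s b) := by
        apply monotoneOn_of_deriv_nonneg (convex_Icc s b) (hIc.mono hIccS)
        · intro x hx
          rw [interior_Icc] at hx
          exact (hDI x hx).differentiableAt.differentiableWithinAt
        · intro x hx
          rw [interior_Icc] at hx
          rw [(hDI x hx).deriv]
          exact hJnn x ⟨hx.1.le, hx.2.le⟩
      exact hImono (Set.left_mem_Icc.mpr hb.1) ⟨hb.1, le_rfl⟩ hb.1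
    have hev : ∀ᶠ b in L, I s ≤ I b := by
      filter_upwards [Ioo_mem_nhdsLT_of_mem (⟨hs.2, le_rfl⟩ : tstar ∈ Set.Ioc s tstar)]
        with b hb
      exact hmono b ⟨hb.1.le, hb.2⟩
    have hle : I s ≤ 0 := ge_of_tendsto hIlim hev
    linarith [hIpos s hsS]
  -- Sundman inequality
  have hSund : ∀ t ∈ S, ‖C t‖ ^ 2 ≤ I t * W t := by
    intro t htS
    have h1 : ‖C t‖ ≤ ∑ j, m j * (‖r j t‖ * ‖v j t‖) := by
      rw [hCdef]
      refine le_trans (norm_sum_le _ _) (Finset.sum_le_sum fun j _ => ?_)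
      rw [norm_smul, Real.norm_eq_abs, abs_of_pos (hm j)]
      exact mul_le_mul_of_nonneg_left (norm_cross_le _ _) (hm j).le
    have h2 := Finset.sum_mul_sq_le_sq_mul_sq Finset.univ
      (fun j => Real.sqrt (m j) * ‖r j t‖) (fun j => Real.sqrt (m j) * ‖v j t‖)
    have e1 : ∀ j : Fin N, (Real.sqrt (m j) * ‖r j t‖) * (Real.sqrt (m j) * ‖v j t‖)
        = m j * (‖r j t‖ * ‖v j t‖) := fun j => by
      have h := Real.mul_self_sqrt (hm j).le
      calc (Real.sqrt (m j) * ‖r j t‖) * (Real.sqrt (m j) * ‖v j t‖)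
          = (Real.sqrt (m j) * Real.sqrt (m j)) * (‖r j t‖ * ‖v j t‖) := by ring
        _ = m j * (‖r j t‖ * ‖v j t‖) := by rw [h]
    have e2 : ∀ j : Fin N, (Real.sqrt (m j) * ‖r j t‖) ^ 2 = m j * ‖r j t‖ ^ 2 := fun j => by
      rw [mul_pow, Real.sq_sqrt (hm j).le]
    have e3 : ∀ j : Fin N, (Real.sqrt (m j) * ‖v j t‖) ^ 2 = m j * ‖v j t‖ ^ 2 := fun j => by
      rw [mul_pow, Real.sq_sqrt (hm j).le]
    have h2' : (∑ j, m j * (‖r j t‖ * ‖v j t‖)) ^ 2 ≤ I t * W t := by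
      rw [hIdef, hWdef]
      calc (∑ j, m j * (‖r j t‖ * ‖v j t‖)) ^ 2
          = (∑ j, (Real.sqrt (m j) * ‖r j t‖) * (Real.sqrt (m j) * ‖v j t‖)) ^ 2 := by
            rw [Finset.sum_congr rfl fun j _ => (e1 j).symm]
        _ ≤ (∑ j, (Real.sqrt (m j) * ‖r j t‖) ^ 2)
            * (∑ j, (Real.sqrt (m j) * ‖v j t‖) ^ 2) := h2
        _ = (∑ j, m j * ‖r j t‖ ^ 2) * (∑ j, m j * ‖v j t‖ ^ 2) := by
            rw [Finset.sum_congr rfl fun j _ => e2 j, Finset.sum_congr rfl fun j _ => e3 j]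
    exact le_trans (pow_le_pow_left₀ (norm_nonneg _) h1 2) h2'
  -- main contradiction: C t₀ = 0
  have hC0 : C t₀ = 0 := by
    by_contra hCne
    set c2 : ℝ := ‖C t₀‖ ^ 2 with hc2def
    have hc2 : 0 < c2 := pow_pos (norm_pos_iff.mpr hCne) 2
    clear_value c2
    set g : ℝ → ℝ := fun s => (J s) ^ 2 / 2 - 2 * E0 * I s - c2 * Real.log (I s) with hgdef
    have hgD : ∀ x ∈ Set.Ioo t₀ tstar, HasDerivAt g
        (J x * (2 * W x - 2 * U x) - 2 * E0 * J x - c2 * (J x / I x)) x := by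
      intro x hx
      have hxS : x ∈ S := ⟨hx.1.le, hx.2⟩
      have hnx : S ∈ nhds x := by rw [hSdef]; exact Ico_mem_nhds hx.1 hx.2
      have hJx := (hJd x hxS).hasDerivAt hnx
      have hIx := (hId x hxS).hasDerivAt hnx
      have hI0 : I x ≠ 0 := (hIpos x hxS).ne'
      have h1 : HasDerivAt (fun s => (J s) ^ 2 / 2) (J x * (2 * W x - 2 * U x)) x := by
        have h := (hJx.pow 2).div_const 2
        convert h using 1
        · rfl
        · rfl
        · rfl
        simp only [Nat.cast_ofNat, show (2:ℕ) - 1 = 1 from rfl, pow_one]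
        ring
      have h2 : HasDerivAt (fun s => 2 * E0 * I s) (2 * E0 * J x) x := hIx.const_mul _
      have h3 : HasDerivAt (fun s => c2 * Real.log (I s)) (c2 * (J x / I x)) x :=
        (hIx.log hI0).const_mul _
      exact (h1.sub h2).sub h3
    have hganti : ∀ s ∈ Set.Ico t₁ tstar, g s ≤ g t₁ := by
      intro s hs
      rcases eq_or_lt_of_le hs.1 with heq | hts
      · rw [← heq]
      have hIccS : Set.Icc t₁ s ⊆ S := fun x hx =>
        ⟨le_trans ht₁S.1.le hx.1, lt_of_le_of_lt hx.2 hs.2⟩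
      have hgc : ContinuousOn g (Set.Icc t₁ s) := by
        refine ContinuousOn.sub (ContinuousOn.sub ?_ ?_) ?_
        · exact ((hJc.mono hIccS).pow 2).div_const 2
        · exact continuousOn_const.mul (hIc.mono hIccS)
        · exact continuousOn_const.mul
            ((hIc.mono hIccS).log (fun x hx => (hIpos x (hIccS hx)).ne'))
      have hanti : AntitoneOn g (Set.Icc t₁ s) := by
        apply antitoneOn_of_deriv_nonpos (convex_Icc t₁ s) hgc
        · intro x hx
          rw [interior_Icc] at hx
          have hx' : x ∈ Set.Ioo t₀ tstar := ⟨lt_trans ht₁S.1 hx.1, lt_trans hx.2 hs.2⟩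
          exact (hgD x hx').differentiableAt.differentiableWithinAt
        · intro x hx
          rw [interior_Icc] at hx
          have hx' : x ∈ Set.Ioo t₀ tstar := ⟨lt_trans ht₁S.1 hx.1, lt_trans hx.2 hs.2⟩
          have hxS : x ∈ S := ⟨hx'.1.le, hx'.2⟩
          rw [(hgD x hx').deriv]
          have hKW : 2 * W x - 2 * U x - 2 * E0 = W x := by
            have h := hEconst x hxS
            linarith
          have hJxneg : J x < 0 := hJneg x ⟨hx.1.le, lt_trans hx.2 hs.2⟩
          have hCc : ‖C x‖ ^ 2 = c2 := by rw [hCconst x hxS, ← hc2def]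
          have hS' := hSund x hxS
          rw [hCc] at hS'
          have hIx := hIpos x hxS
          have hdiv : c2 / I x ≤ W x := (div_le_iff₀ hIx).mpr (by nlinarith)
          calc J x * (2 * W x - 2 * U x) - 2 * E0 * J x - c2 * (J x / I x)
              = J x * ((2 * W x - 2 * U x - 2 * E0) - c2 / I x) := by ring
            _ = J x * (W x - c2 / I x) := by rw [hKW]
            _ ≤ 0 := mul_nonpos_iff.mpr (Or.inr ⟨hJxneg.le, by linarith⟩)
      exact hanti (Set.left_mem_Icc.mpr hs.1) (Set.right_mem_Icc.mpr hs.1) hs.1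
    have hIposev : ∀ᶠ s in L, 0 < I s := by
      filter_upwards [hIoo_mem] with s hsI
      exact hIpos s (hIooS hsI)
    have hlog : Filter.Tendsto (fun s => Real.log (I s)) L Filter.atBot :=
      Real.tendsto_log_nhdsGT_zero.comp
        (tendsto_nhdsWithin_iff.mpr ⟨hIlim, hIposev⟩)
    have hterm : Filter.Tendsto (fun s => -(c2 * Real.log (I s))) L Filter.atTop := by
      have h5 : Filter.Tendsto (fun s => c2 * Real.log (I s)) L Filter.atBot :=
        hlog.const_mul_atBot hc2
      exact Filter.tendsto_neg_atBot_atTop.comp h5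
    have hconst : Filter.Tendsto (fun s => -(2 * E0 * I s)) L (nhds (-(2 * E0 * 0))) :=
      (hIlim.const_mul _).neg
    have hlower : Filter.Tendsto (fun s => -(2 * E0 * I s) + -(c2 * Real.log (I s)))
        L Filter.atTop := Filter.Tendsto.add_atTop hconst hterm
    have hgtop : Filter.Tendsto g L Filter.atTop := by
      apply Filter.tendsto_atTop_mono _ hlower
      intro s
      have hsq : 0 ≤ (J s) ^ 2 / 2 := by positivity
      rw [hgdef]
      simp only
      linarith
    have hev1 : ∀ᶠ s in L, g t₁ + 1 ≤ g s := hgtop.eventually_ge_atTop _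
    have hev2 : ∀ᶠ s in L, s ∈ Set.Ico t₁ tstar := by
      filter_upwards [Ioo_mem_nhdsLT_of_mem (⟨ht₁S.2, le_rfl⟩ : tstar ∈ Set.Ioc t₁ tstar)]
        with s hsI
      exact ⟨hsI.1.le, hsI.2⟩
    obtain ⟨s, hs1, hs2⟩ := (hev1.and hev2).exists
    linarith [hganti s hs2]
  intro t htS
  have := hCconst t htS
  rw [hC0] at this
  exact this
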